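/- Let p be a polynomial and f a polynomial vector field on ℝ^n. Then In_f({x : p(x) > 0}) = Γ₊(p,f) and In_f({x : p(x) ≥ 0}) = Γ₀(p,f) ∪ Γ₊(p,f), where Γ₀(p,f) := {x : L^k_f p(x) = 0 for all k ∈ ℕ} and Γ₊(p,f) := {x : γ_{p,f}(x) < ∞ and L^{γ_{p,f}(x)}_f p(x) > 0}. -/

import Mathlib

/-- The Lie derivative of a polynomial `p` along the polynomial vector field `f`. -/
noncomputable def lieDeriv {n : ℕ} (f : Fin n → MvPolynomial (Fin n) ℝ)
    (p : MvPolynomial (Fin n) ℝ) : MvPolynomial (Fin n) ℝ :=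
  ∑ j, MvPolynomial.pderiv j p * f j

/-- Iterated Lie derivatives: `lieIter f k p = L^k_f p`. -/
noncomputable def lieIter {n : ℕ} (f : Fin n → MvPolynomial (Fin n) ℝ)
    (k : ℕ) (p : MvPolynomial (Fin n) ℝ) : MvPolynomial (Fin n) ℝ :=
  match k with
  | 0 => p
  | k + 1 => lieDeriv f (lieIter f k p)

/-- `φ` is a global flow of the polynomial vector field `f`. -/
def IsPolyFlow {n : ℕ} (f : Fin n → MvPolynomial (Fin n) ℝ)
    (φ : (Fin n → ℝ) → ℝ → (Fin n → ℝ)) : Prop :=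
  (∀ x₀, φ x₀ 0 = x₀) ∧
    ∀ x₀ t (i : Fin n),
      HasDerivAt (fun s => φ x₀ s i) (MvPolynomial.eval (φ x₀ t) (f i)) t

/-- `In_f(A)`: points whose forward trajectory enters `A` immediately. -/
def InSet {n : ℕ} (φ : (Fin n → ℝ) → ℝ → (Fin n → ℝ)) (A : Set (Fin n → ℝ)) :
    Set (Fin n → ℝ) :=
  {x₀ | ∃ ε > 0, ∀ t ∈ Set.Ioo (0:ℝ) ε, φ x₀ t ∈ A}

/-- `IvIn_f(A)`: points whose backward trajectory comes from inside `A`. -/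
def IvInSet {n : ℕ} (φ : (Fin n → ℝ) → ℝ → (Fin n → ℝ)) (A : Set (Fin n → ℝ)) :
    Set (Fin n → ℝ) :=
  {x₀ | ∃ ε > 0, ∀ t ∈ Set.Ioo (0:ℝ) ε, φ x₀ (-t) ∈ A}

/-- `Γ₀(p,f)`: points where all Lie derivatives of `p` along `f` vanish. -/
def Gamma0 {n : ℕ} (f : Fin n → MvPolynomial (Fin n) ℝ)
    (p : MvPolynomial (Fin n) ℝ) : Set (Fin n → ℝ) :=
  {x | ∀ k : ℕ, MvPolynomial.eval x (lieIter f k p) = 0}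

/-- `Γ₊(p,f)`: points of finite pointwise rank whose first nonzero Lie
derivative is positive. -/
def GammaPlus {n : ℕ} (f : Fin n → MvPolynomial (Fin n) ℝ)
    (p : MvPolynomial (Fin n) ℝ) : Set (Fin n → ℝ) :=
  {x | ∃ k : ℕ, (∀ j < k, MvPolynomial.eval x (lieIter f j p) = 0) ∧
        0 < MvPolynomial.eval x (lieIter f k p)}

open MvPolynomial Set

/-! ### Auxiliary lemmas -/

lemma lieDeriv_add' {n : ℕ} (f : Fin n → MvPolynomial (Fin n) ℝ) (p q : MvPolynomial (Fin n) ℝ) :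
    lieDeriv f (p + q) = lieDeriv f p + lieDeriv f q := by
  simp [lieDeriv, add_mul, Finset.sum_add_distrib]

lemma lieDeriv_C' {n : ℕ} (f : Fin n → MvPolynomial (Fin n) ℝ) (a : ℝ) :
    lieDeriv f (MvPolynomial.C a) = 0 := by
  simp [lieDeriv]

lemma lieDeriv_mul_X' {n : ℕ} (f : Fin n → MvPolynomial (Fin n) ℝ) (p : MvPolynomial (Fin n) ℝ)
    (i : Fin n) : lieDeriv f (p * X i) = lieDeriv f p * X i + p * f i := by
  simp only [lieDeriv, pderiv_mul, pderiv_X, Finset.sum_mul, add_mul]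
  rw [Finset.sum_add_distrib]
  congr 1
  · exact Finset.sum_congr rfl fun j _ => by ring
  · rw [Finset.sum_eq_single i]
    · simp
    · intro j _ hj; simp [Pi.single_apply, hj]
    · simp

/-- Chain rule along the flow: the time derivative of `p ∘ φ` is the Lie
derivative of `p` evaluated along the flow. -/
lemma hasDerivAt_eval_flow {n : ℕ} {f : Fin n → MvPolynomial (Fin n) ℝ}
    {φ : (Fin n → ℝ) → ℝ → (Fin n → ℝ)} (hφ : IsPolyFlow f φ) (x₀ : Fin n → ℝ)
    (q : MvPolynomial (Fin n) ℝ) (t : ℝ) :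
    HasDerivAt (fun s => MvPolynomial.eval (φ x₀ s) q)
      (MvPolynomial.eval (φ x₀ t) (lieDeriv f q)) t := by
  induction q using MvPolynomial.induction_on with
  | C a => simpa [lieDeriv_C'] using hasDerivAt_const t (a : ℝ)
  | add p q hp hq => simpa [lieDeriv_add', Pi.add_def] using hp.add hq
  | mul_X p i hp =>
    have := hp.mul (hφ.2 x₀ t i)
    simpa [lieDeriv_mul_X', Pi.mul_def, mul_comm, mul_assoc, mul_left_comm] using this

/-- If the first nonvanishing derivative at `0` (of order `k`) is positive, the
function is positive on a right neighborhood of `0`. -/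
lemma pos_of_first_deriv_pos :
    ∀ (k : ℕ) (g : ℕ → ℝ → ℝ), (∀ k t, HasDerivAt (g k) (g (k+1) t) t) →
    (∀ j < k, g j 0 = 0) → 0 < g k 0 →
    ∃ ε > 0, ∀ t ∈ Set.Ioo (0:ℝ) ε, 0 < g 0 t := by
  intro k
  induction k with
  | zero =>
    intro g hd _ hk
    have hc : ContinuousAt (g 0) 0 := (hd 0 0).continuousAt
    have := hc.eventually (lt_mem_nhds hk)
    rw [Metric.eventually_nhds_iff] at this
    obtain ⟨ε, hε, h⟩ := this
    exact ⟨ε, hε, fun t ht => h (by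
      simp only [Real.dist_eq, sub_zero, abs_lt]
      constructor <;> linarith [ht.1, ht.2])⟩
  | succ k ih =>
    intro g hd h0 hk
    obtain ⟨ε, hε, h1⟩ := ih (fun j => g (j+1)) (fun j t => hd (j+1) t)
      (fun j hj => h0 (j+1) (by omega)) hk
    refine ⟨ε, hε, fun t ht => ?_⟩
    have hmono : StrictMonoOn (g 0) (Icc 0 ε) := by
      apply strictMonoOn_of_deriv_pos (convex_Icc 0 ε)
      · exact fun x _ => ((hd 0 x).continuousAt).continuousWithinAt
      · intro x hx
        rw [interior_Icc] at hx
        rw [(hd 0 x).deriv]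
        exact h1 x hx
    have h00 : g 0 0 = 0 := h0 0 (by omega)
    have := hmono (left_mem_Icc.mpr hε.le) ⟨ht.1.le, ht.2.le⟩ ht.1
    linarith

/-- By Noetherianity, some iterated Lie derivative is a polynomial combination
of the previous ones. -/
lemma exists_linear_relation {n : ℕ} (f : Fin n → MvPolynomial (Fin n) ℝ)
    (p : MvPolynomial (Fin n) ℝ) :
    ∃ (N : ℕ) (c : Fin (N+1) → MvPolynomial (Fin n) ℝ),
      lieIter f (N+1) p = ∑ j : Fin (N+1), c j * lieIter f (j:ℕ) p := by
  have hmono : Monotone (fun k => Ideal.span (Set.range fun j : Fin (k+1) => lieIter f j p)) := by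
    intro a b hab
    apply Ideal.span_mono
    rintro _ ⟨j, rfl⟩
    exact ⟨⟨j, by omega⟩, rfl⟩
  obtain ⟨N, hN⟩ := monotone_stabilizes_iff_noetherian.mpr
    (isNoetherianRing_iff.mp inferInstance)
    ⟨fun k => Ideal.span (Set.range fun j : Fin (k+1) => lieIter f j p), hmono⟩
  have hmem : lieIter f (N+1) p ∈
      Ideal.span (Set.range fun j : Fin (N+1) => lieIter f (j:ℕ) p) := by
    have h1 : lieIter f (N+1) p ∈
        Ideal.span (Set.range fun j : Fin (N+2) => lieIter f (j:ℕ) p) :=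
      Ideal.subset_span ⟨⟨N+1, by omega⟩, rfl⟩
    have h2 := hN (N+1) (by omega)
    simp only [OrderHom.coe_mk] at h2
    rw [h2]
    exact h1
  rw [Ideal.span, Submodule.mem_span_range_iff_exists_fun] at hmem
  obtain ⟨c, hc⟩ := hmem
  exact ⟨N, c, by rw [← hc]; simp [smul_eq_mul]⟩

/-- If all iterated Lie derivatives vanish at `x₀`, then `p` vanishes
identically along the trajectory on `[0,1]` (by Gronwall's inequality). -/
lemma eval_flow_eq_zero {n : ℕ} {f : Fin n → MvPolynomial (Fin n) ℝ}
    {p : MvPolynomial (Fin n) ℝ} {φ : (Fin n → ℝ) → ℝ → (Fin n → ℝ)}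
    (hφ : IsPolyFlow f φ) {x₀ : Fin n → ℝ}
    (hx : ∀ k, MvPolynomial.eval x₀ (lieIter f k p) = 0) :
    ∀ t ∈ Icc (0:ℝ) 1, MvPolynomial.eval (φ x₀ t) p = 0 := by
  obtain ⟨N, c, hrel⟩ := exists_linear_relation f p
  set h : ℝ → (Fin (N+1) → ℝ) := fun t j => MvPolynomial.eval (φ x₀ t) (lieIter f (j:ℕ) p)
    with hh
  set h' : ℝ → (Fin (N+1) → ℝ) :=
    fun t j => MvPolynomial.eval (φ x₀ t) (lieIter f ((j:ℕ)+1) p) with hh'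
  have hder : ∀ t, HasDerivAt h (h' t) t := by
    intro t
    rw [hasDerivAt_pi]
    intro j
    exact hasDerivAt_eval_flow hφ x₀ (lieIter f (j:ℕ) p) t
  have hBcont : ContinuousOn (fun t => ∑ j : Fin (N+1), |MvPolynomial.eval (φ x₀ t) (c j)|)
      (Icc (0:ℝ) 1) := by
    apply continuousOn_finset_sum
    intro j _
    exact fun t _ => ((hasDerivAt_eval_flow hφ x₀ (c j) t).continuousAt.abs).continuousWithinAt
  obtain ⟨C, hC⟩ := (isCompact_Icc (a := (0:ℝ)) (b := 1)).exists_bound_of_continuousOn hBcont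
  set K := max C 1 with hK
  have hK1 : (1:ℝ) ≤ K := le_max_right _ _
  have hbound : ∀ t ∈ Icc (0:ℝ) 1, ‖h' t‖ ≤ K * ‖h t‖ + 0 := by
    intro t ht
    rw [add_zero]
    have hnn : (0:ℝ) ≤ K * ‖h t‖ := mul_nonneg (by linarith) (norm_nonneg _)
    rw [pi_norm_le_iff_of_nonneg hnn]
    intro j
    by_cases hj : (j:ℕ) < N
    · have : h' t j = h t ⟨(j:ℕ)+1, by omega⟩ := rfl
      rw [this]
      calc ‖h t ⟨(j:ℕ)+1, by omega⟩‖ ≤ ‖h t‖ := norm_le_pi_norm _ _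
        _ = 1 * ‖h t‖ := (one_mul _).symm
        _ ≤ K * ‖h t‖ := mul_le_mul_of_nonneg_right hK1 (norm_nonneg _)
    · have hjN : (j:ℕ) = N := by omega
      have : h' t j = ∑ i : Fin (N+1), MvPolynomial.eval (φ x₀ t) (c i) * h t i := by
        simp only [hh', hh, hjN, hrel, map_sum, map_mul]
      rw [this]
      have habs : |∑ i : Fin (N+1), MvPolynomial.eval (φ x₀ t) (c i) * h t i|
          ≤ ∑ i : Fin (N+1), |MvPolynomial.eval (φ x₀ t) (c i)| * ‖h t‖ := by
        refine (Finset.abs_sum_le_sum_abs _ _).trans ?_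
        apply Finset.sum_le_sum
        intro i _
        rw [abs_mul]
        exact mul_le_mul_of_nonneg_left (norm_le_pi_norm (h t) i) (abs_nonneg _)
      rw [Real.norm_eq_abs]
      refine habs.trans ?_
      rw [← Finset.sum_mul]
      apply mul_le_mul_of_nonneg_right _ (norm_nonneg _)
      calc (∑ i : Fin (N+1), |MvPolynomial.eval (φ x₀ t) (c i)|)
          ≤ ‖∑ i : Fin (N+1), |MvPolynomial.eval (φ x₀ t) (c i)|‖ := le_abs_self _
        _ ≤ C := hC t ht
        _ ≤ K := le_max_left _ _
  have h0 : h 0 = 0 := by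
    funext j
    simp only [hh, hφ.1 x₀]
    exact hx (j:ℕ)
  have := norm_le_gronwallBound_of_norm_deriv_right_le
    (f := h) (f' := h') (δ := 0) (K := K) (ε := 0) (a := 0) (b := 1)
    (fun t _ => (hder t).continuousAt.continuousWithinAt)
    (fun t _ => (hder t).hasDerivWithinAt)
    (by rw [h0]; simp)
    (fun t ht => hbound t (Ico_subset_Icc_self ht))
  intro t ht
  have hle := this t ht
  rw [sub_zero, gronwallBound_ε0_δ0] at hle
  have hzero : h t = 0 := by rwa [norm_le_zero_iff] at hle
  have := congrFun hzero ⟨0, by omega⟩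
  simpa [hh, lieIter] using this

/-- Characterization of the immediate-entry sets of `{p > 0}` and `{p ≥ 0}` via
first nonzero Lie derivatives. -/
theorem in_set_atomic_characterization
    {n : ℕ} (f : Fin n → MvPolynomial (Fin n) ℝ) (p : MvPolynomial (Fin n) ℝ)
    (φ : (Fin n → ℝ) → ℝ → (Fin n → ℝ)) (hφ : IsPolyFlow f φ) :
    InSet φ {x | 0 < MvPolynomial.eval x p} = GammaPlus f p ∧
    InSet φ {x | 0 ≤ MvPolynomial.eval x p} = Gamma0 f p ∪ GammaPlus f p := by
  have key : ∀ (x₀ : Fin n → ℝ) (k : ℕ) (t : ℝ),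
      HasDerivAt (fun s => MvPolynomial.eval (φ x₀ s) (lieIter f k p))
        (MvPolynomial.eval (φ x₀ t) (lieIter f (k+1) p)) t :=
    fun x₀ k t => hasDerivAt_eval_flow hφ x₀ (lieIter f k p) t
  have hg0 : ∀ (x₀ : Fin n → ℝ) (k : ℕ),
      MvPolynomial.eval (φ x₀ 0) (lieIter f k p) = MvPolynomial.eval x₀ (lieIter f k p) := by
    intro x₀ k; rw [hφ.1 x₀]
  -- from GammaPlus: positivity on a right neighborhood
  have hplus : ∀ x₀ ∈ GammaPlus f p, ∃ ε > 0, ∀ t ∈ Set.Ioo (0:ℝ) ε,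
      0 < MvPolynomial.eval (φ x₀ t) p := by
    rintro x₀ ⟨k, h0, hk⟩
    obtain ⟨ε, hε, hp⟩ := pos_of_first_deriv_pos k
      (fun k t => MvPolynomial.eval (φ x₀ t) (lieIter f k p))
      (fun k t => key x₀ k t)
      (fun j hj => by show MvPolynomial.eval (φ x₀ 0) (lieIter f j p) = 0; rw [hg0]; exact h0 j hj)
      (by show 0 < MvPolynomial.eval (φ x₀ 0) (lieIter f k p); rw [hg0]; exact hk)
    exact ⟨ε, hε, fun t ht => hp t ht⟩
  -- from "GammaMinus": negativity on a right neighborhood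
  have hminus : ∀ (x₀ : Fin n → ℝ) (k : ℕ),
      (∀ j < k, MvPolynomial.eval x₀ (lieIter f j p) = 0) →
      MvPolynomial.eval x₀ (lieIter f k p) < 0 →
      ∃ ε > 0, ∀ t ∈ Set.Ioo (0:ℝ) ε, MvPolynomial.eval (φ x₀ t) p < 0 := by
    intro x₀ k h0 hk
    obtain ⟨ε, hε, hp⟩ := pos_of_first_deriv_pos k
      (fun k t => -(MvPolynomial.eval (φ x₀ t) (lieIter f k p)))
      (fun k t => (key x₀ k t).neg)
      (fun j hj => by
        show -(MvPolynomial.eval (φ x₀ 0) (lieIter f j p)) = 0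
        rw [hg0, h0 j hj]; ring)
      (by show 0 < -(MvPolynomial.eval (φ x₀ 0) (lieIter f k p)); rw [hg0]; linarith)
    refine ⟨ε, hε, fun t ht => ?_⟩
    have := hp t ht
    have h00 : lieIter f 0 p = p := rfl
    rw [h00] at this
    linarith
  constructor
  · ext x₀
    simp only [InSet, GammaPlus, Set.mem_setOf_eq]
    constructor
    · rintro ⟨ε, hε, hin⟩
      by_cases hall : ∀ k, MvPolynomial.eval x₀ (lieIter f k p) = 0
      · exfalso
        have hz := eval_flow_eq_zero hφ hall
        set t := min ε 1 / 2 with htdef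
        have ht1 : 0 < t := by positivity
        have ht2 : t < ε := by
          have := min_le_left ε 1; simp only [htdef]; linarith
        have ht3 : t ≤ 1 := by
          have := min_le_right ε 1; simp only [htdef]; linarith
        have := hin t ⟨ht1, ht2⟩
        rw [hz t ⟨ht1.le, ht3⟩] at this
        exact lt_irrefl 0 this
      · push_neg at hall
        have hk := Nat.find_spec hall
        have hmin : ∀ j < Nat.find hall, MvPolynomial.eval x₀ (lieIter f j p) = 0 :=
          fun j hj => not_not.mp (Nat.find_min hall hj)
        rcases (Ne.lt_or_gt hk) with hneg | hpos
        · exfalso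
          obtain ⟨δ, hδ, hn⟩ := hminus x₀ (Nat.find hall) hmin hneg
          set t := min ε δ / 2 with htdef
          have ht1 : 0 < t := by positivity
          have ht2 : t < ε := by
            have := min_le_left ε δ; simp only [htdef]; linarith
          have ht3 : t < δ := by
            have := min_le_right ε δ; simp only [htdef]; linarith
          have h1 := hin t ⟨ht1, ht2⟩
          have h2 := hn t ⟨ht1, ht3⟩
          linarith
        · exact ⟨Nat.find hall, hmin, hpos⟩
    · rintro ⟨k, h0, hk⟩
      exact hplus x₀ ⟨k, h0, hk⟩
  · ext x₀
    simp only [InSet, Gamma0, GammaPlus, Set.mem_union, Set.mem_setOf_eq]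
    constructor
    · rintro ⟨ε, hε, hin⟩
      by_cases hall : ∀ k, MvPolynomial.eval x₀ (lieIter f k p) = 0
      · exact Or.inl hall
      · push_neg at hall
        have hk := Nat.find_spec hall
        have hmin : ∀ j < Nat.find hall, MvPolynomial.eval x₀ (lieIter f j p) = 0 :=
          fun j hj => not_not.mp (Nat.find_min hall hj)
        rcases (Ne.lt_or_gt hk) with hneg | hpos
        · exfalso
          obtain ⟨δ, hδ, hn⟩ := hminus x₀ (Nat.find hall) hmin hneg
          set t := min ε δ / 2 with htdef
          have ht1 : 0 < t := by positivity
          have ht2 : t < ε := by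
            have := min_le_left ε δ; simp only [htdef]; linarith
          have ht3 : t < δ := by
            have := min_le_right ε δ; simp only [htdef]; linarith
          have h1 := hin t ⟨ht1, ht2⟩
          have h2 := hn t ⟨ht1, ht3⟩
          linarith
        · exact Or.inr ⟨Nat.find hall, hmin, hpos⟩
    · rintro (h0 | hp)
      · refine ⟨1, one_pos, fun t ht => ?_⟩
        have := eval_flow_eq_zero hφ h0 t ⟨ht.1.le, ht.2.le⟩
        show (0:ℝ) ≤ MvPolynomial.eval (φ x₀ t) p
        rw [this]
      · obtain ⟨ε, hε, h⟩ := hplus x₀ hp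
        exact ⟨ε, hε, fun t ht => (h t ht).le⟩
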